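/- arXiv:2103.16405 — 4 statements merged into one kernel-verified Lean document; each statement's English description precedes it below -/
import Mathlib

section
/- Every single-selection coverage game with a set K of compromised agents admits at least one pure Nash equilibrium, where compromised agents play any maximum-value resource in their action set and remaining agents play a Nash equilibrium of the induced potential game with marginal-contribution utilities. -/
open Finset

variable {N R : Type} [Fintype N] [DecidableEq N] [Fintype R] [DecidableEq R]

/-- Welfare of the set of resources selected by agents in `J` under profile `a`. -/
def coveredValue (v : R → ℝ) (a : N → R) (J : Finset N) : ℝ :=
  ∑ r ∈ J.image a, v r

/-- Marginal-contribution utility: `U_i(a) = W(a) - W(∅, a_{-i})`. -/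
def utility (v : R → ℝ) (a : N → R) (i : N) : ℝ :=
  coveredValue v a Finset.univ - coveredValue v a (Finset.univ.erase i)

/-- A joint action profile: each agent selects an admissible resource. -/
def isProfile (A : N → Finset R) (a : N → R) : Prop :=
  ∀ i, a i ∈ A i

/-- Pure Nash equilibrium with compromised agent set `K`: normal agents have no
profitable unilateral deviation w.r.t. marginal-contribution utilities, and each
compromised agent selects a maximum-value resource of its action set. -/
def isNE (A : N → Finset R) (K : Finset N) (v : R → ℝ) (a : N → R) : Prop :=
  isProfile A a ∧
  (∀ i, i ∉ K → ∀ b ∈ A i, utility v (Function.update a i b) i ≤ utility v a i) ∧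
  (∀ j ∈ K, ∀ r ∈ A j, v r ≤ v (a j))

/-- Optimal welfare of the game. -/
noncomputable def optWelfare (A : N → Finset R) (v : R → ℝ) : ℝ :=
  sSup {w | ∃ a, isProfile A a ∧ w = coveredValue v a Finset.univ}

/-- Worst-case Nash equilibrium welfare. -/
noncomputable def worstNEWelfare (A : N → Finset R) (K : Finset N) (v : R → ℝ) : ℝ :=
  sInf {w | ∃ a, isNE A K v a ∧ w = coveredValue v a Finset.univ}

/-- Price of anarchy. -/
noncomputable def PoA (A : N → Finset R) (K : Finset N) (v : R → ℝ) : ℝ :=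
  worstNEWelfare A K v / optWelfare A v

/-- `PoS(G) = 1`: some Nash equilibrium is welfare-optimal. -/
def PoSoneHolds (A : N → Finset R) (K : Finset N) (v : R → ℝ) : Prop :=
  ∃ a, isNE A K v a ∧
    ∀ b, isProfile A b → coveredValue v b Finset.univ ≤ coveredValue v a Finset.univ

/-- Distance of the game: minimal ℓ1-norm of a nonnegative perturbation of the
resource values yielding a game with an optimal Nash equilibrium. -/
noncomputable def gameDist (A : N → Finset R) (K : Finset N) (v : R → ℝ) : ℝ :=
  sInf {c | ∃ p : R → ℝ, (∀ r, 0 ≤ p r) ∧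
    PoSoneHolds A K (fun r => v r + p r) ∧ c = ∑ r, p r}

lemma covered_erase (v : R → ℝ) (a : N → R) (i : N) (b : R) :
    coveredValue v (Function.update a i b) (Finset.univ.erase i) =
      coveredValue v a (Finset.univ.erase i) := by
  unfold coveredValue
  congr 1
  apply Finset.image_congr
  intro j hj
  exact Function.update_of_ne (Finset.mem_erase.mp hj).1 b a

/-- Every single-selection coverage game with compromised agents admits a pure
Nash equilibrium; moreover, for any assignment of the compromised agents to
maximum-value resources in their action sets, there is a Nash equilibrium in
which they play exactly those resources. -/
theorem exists_pure_nash (A : N → Finset R) (K : Finset N) (v : R → ℝ)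
    (hA : ∀ i, (A i).Nonempty) :
    (∃ a, isNE A K v a) ∧
    ∀ c : N → R, (∀ j ∈ K, c j ∈ A j ∧ ∀ r ∈ A j, v r ≤ v (c j)) →
      ∃ a, isNE A K v a ∧ ∀ j ∈ K, a j = c j := by
  classical
  have main : ∀ c : N → R, (∀ j ∈ K, c j ∈ A j ∧ ∀ r ∈ A j, v r ≤ v (c j)) →
      ∃ a, isNE A K v a ∧ ∀ j ∈ K, a j = c j := by
    intro c hc
    set S : Finset (N → R) :=
      Finset.univ.filter (fun a => (∀ i, a i ∈ A i) ∧ ∀ j ∈ K, a j = c j) with hS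
    have hSne : S.Nonempty := by
      refine ⟨fun i => if h : i ∈ K then c i else (hA i).choose, ?_⟩
      simp only [hS, Finset.mem_filter, Finset.mem_univ, true_and]
      constructor
      · intro i
        by_cases h : i ∈ K
        · simpa [h] using (hc i h).1
        · simpa [h] using (hA i).choose_spec
      · intro j hj; simp [hj]
    obtain ⟨a, haS, hmax⟩ := S.exists_max_image (fun a => coveredValue v a Finset.univ) hSne
    simp only [hS, Finset.mem_filter, Finset.mem_univ, true_and] at haS
    refine ⟨a, ⟨haS.1, ?_, ?_⟩, haS.2⟩
    · intro i hi b hb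
      have hmem : Function.update a i b ∈ S := by
        simp only [hS, Finset.mem_filter, Finset.mem_univ, true_and]
        constructor
        · intro j
          by_cases h : j = i
          · subst h; simpa using hb
          · simpa [Function.update_of_ne h] using haS.1 j
        · intro j hj
          have : j ≠ i := fun h => hi (h ▸ hj)
          rw [Function.update_of_ne this]; exact haS.2 j hj
      have := hmax _ hmem
      unfold utility
      rw [covered_erase]
      linarith
    · intro j hj r hr
      rw [haS.2 j hj]
      exact (hc j hj).2 r hr
  refine ⟨?_, main⟩
  have : ∀ j, ∃ r, r ∈ A j ∧ ∀ s ∈ A j, v s ≤ v r := by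
    intro j
    obtain ⟨r, hr, hm⟩ := (A j).exists_max_image v (hA j)
    exact ⟨r, hr, hm⟩
  choose c hc1 hc2 using this
  obtain ⟨a, ha, _⟩ := main c (fun j _ => ⟨hc1 j, hc2 j⟩)
  exact ⟨a, ha⟩
end

section
/- (Tightness) For every integer k ≥ 1 and every D ∈ [0, k−1], there is a single-selection coverage game G with k compromised agents and distance D(G) = D whose worst Nash equilibrium achieves exactly W(a^{ne})/W(a^{opt}) = 1/(k + 1 − D): take n = k+1 agents, one resource R₀ of value 1 admissible to all agents, and k resources of value 1 − D/k each admissible to exactly one compromised agent; all compromised agents selecting R₀ is a Nash equilibrium of welfare 1, while the optimum has welfare 1 + k(1 − D/k) = k + 1 − D. -/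
open Finset

variable {N R : Type} [Fintype N] [DecidableEq N] [Fintype R] [DecidableEq R]

lemma sum_ite_fin (k : ℕ) (x c : ℝ) :
    ∑ r : Fin (k+1), (if r = 0 then x else c) = x + (k : ℝ) * c := by
  rw [← Finset.add_sum_erase _ _ (Finset.mem_univ (0 : Fin (k+1)))]
  simp only [if_pos rfl]
  congr 1
  rw [Finset.sum_congr rfl (fun r hr => if_neg (Finset.mem_erase.1 hr).1),
    Finset.sum_const, nsmul_eq_mul]
  congr 1
  rw [Finset.card_erase_of_mem (Finset.mem_univ _), Finset.card_univ, Fintype.card_fin]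
  simp

/-- Tightness: for every `k ≥ 1` and `D ∈ [0, k−1]` there is a coverage game
with `k` compromised agents and distance `D` whose worst Nash equilibrium has
welfare 1, optimal welfare `k + 1 − D`, and hence ratio `1/(k + 1 − D)`. -/
theorem tightness (k : ℕ) (hk : 1 ≤ k) (D : ℝ) (hD0 : 0 ≤ D) (hDk : D ≤ (k : ℝ) - 1) :
    ∃ (A : Fin (k + 1) → Finset (Fin (k + 1))) (K : Finset (Fin (k + 1)))
      (v : Fin (k + 1) → ℝ),
      K.card = k ∧
      gameDist A K v = D ∧
      worstNEWelfare A K v = 1 ∧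
      optWelfare A v = (k : ℝ) + 1 - D ∧
      worstNEWelfare A K v / optWelfare A v = 1 / ((k : ℝ) + 1 - D) := by
  have hk0 : (0:ℝ) < (k:ℝ) := by exact_mod_cast hk
  have hkne : (k:ℝ) ≠ 0 := ne_of_gt hk0
  have hDklt : D / (k:ℝ) < 1 := by
    rw [div_lt_one hk0]; linarith
  have hDknn : 0 ≤ D / (k:ℝ) := div_nonneg hD0 (le_of_lt hk0)
  set v : Fin (k+1) → ℝ := fun r => if r = 0 then 1 else 1 - D/(k:ℝ) with hv
  set A : Fin (k+1) → Finset (Fin (k+1)) := fun i => if i = 0 then {0} else {0, i} with hA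
  set K : Finset (Fin (k+1)) := Finset.univ.erase 0 with hK
  have hmemK : ∀ j : Fin (k+1), j ∈ K ↔ j ≠ 0 := by
    intro j; simp [hK]
  have hvpos : ∀ r, 0 < v r := by
    intro r; by_cases h : r = 0 <;> simp [hv, h] <;> linarith
  have hA0 : A 0 = {0} := by simp [hA]
  have hAj : ∀ j : Fin (k+1), j ≠ 0 → A j = {0, j} := by
    intro j hj; simp [hA, hj]
  have hzeroA : ∀ i, (0 : Fin (k+1)) ∈ A i := by
    intro i; by_cases h : i = 0 <;> simp [hA, h]
  have hprof0 : ∀ a : Fin (k+1) → Fin (k+1), isProfile A a → a 0 = 0 := by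
    intro a ha
    have := ha 0
    rw [hA0, Finset.mem_singleton] at this
    exact this
  have hsumv : ∑ r : Fin (k+1), v r = (k:ℝ) + 1 - D := by
    rw [hv, sum_ite_fin]
    field_simp
    ring
  -- the id profile
  have hprofid : isProfile A (fun i => i) := by
    intro i
    by_cases h : i = 0
    · subst h; rw [hA0]; simp
    · rw [hAj i h]; simp
  have himid : (Finset.univ.image (fun i : Fin (k+1) => i)) = Finset.univ := by
    simp
  have hcovid : ∀ w : Fin (k+1) → ℝ, coveredValue w (fun i => i) Finset.univ = ∑ r, w r := by
    intro w; rw [coveredValue, himid]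
  -- general upper bound on welfare
  have hub : ∀ (w : Fin (k+1) → ℝ), (∀ r, 0 ≤ w r) →
      ∀ a : Fin (k+1) → Fin (k+1), coveredValue w a Finset.univ ≤ ∑ r, w r := by
    intro w hw a
    exact Finset.sum_le_sum_of_subset_of_nonneg (Finset.subset_univ _)
      (fun r _ _ => hw r)
  have hworst : worstNEWelfare A K v = 1 := by
    apply IsLeast.csInf_eq
    constructor
    · refine ⟨fun _ => 0, ⟨fun i => hzeroA i, ?_, ?_⟩, ?_⟩
      · intro i hi b hb
        rw [hmemK] at hi
        push_neg at hi
        subst hi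
        rw [hA0, Finset.mem_singleton] at hb
        subst hb
        have : Function.update (fun _ : Fin (k+1) => (0 : Fin (k+1))) 0 0 =
            (fun _ : Fin (k+1) => (0 : Fin (k+1))) := by
          funext x; by_cases h : x = 0 <;> simp [Function.update_apply, h]
        rw [this]
      · intro j hj r hr
        have hv0 : v (0 : Fin (k+1)) = 1 := by simp [hv]
        rw [hv0]
        by_cases h : r = 0 <;> simp [hv, h] <;> linarith
      · rw [coveredValue]
        rw [Finset.image_const Finset.univ_nonempty]
        simp [hv]
    · rintro x ⟨a, ⟨haprof, _, _⟩, rfl⟩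
      have ha0 : a 0 = 0 := hprof0 a haprof
      have hmem : (0 : Fin (k+1)) ∈ Finset.univ.image a := by
        rw [← ha0]; exact Finset.mem_image_of_mem a (Finset.mem_univ 0)
      have := Finset.single_le_sum (f := v) (fun r _ => le_of_lt (hvpos r)) hmem
      simpa [hv, coveredValue] using this
  have hoptW : optWelfare A v = (k:ℝ) + 1 - D := by
    apply IsGreatest.csSup_eq
    constructor
    · exact ⟨fun i => i, hprofid, by rw [hcovid, hsumv]⟩
    · rintro x ⟨a, haprof, rfl⟩
      rw [← hsumv]
      exact hub v (fun r => le_of_lt (hvpos r)) a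
  refine ⟨A, K, v, ?_, ?_, ?_, ?_, ?_⟩
  · rw [hK, Finset.card_erase_of_mem (Finset.mem_univ _), Finset.card_univ, Fintype.card_fin]
    simp
  · -- gameDist = D
    apply IsLeast.csInf_eq
    constructor
    · -- D is in the set: p r = if r = 0 then 0 else D/k
      refine ⟨fun r => if r = 0 then 0 else D/(k:ℝ), ?_, ?_, ?_⟩
      · intro r; by_cases h : r = 0 <;> simp [h, hDknn]
      · -- PoSoneHolds with perturbed values: all equal 1
        have hone : ∀ r : Fin (k+1), v r + (if r = 0 then (0:ℝ) else D/(k:ℝ)) = 1 := by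
          intro r; by_cases h : r = 0 <;> simp [hv, h] <;> ring
        refine ⟨fun i => i, ⟨hprofid, ?_, ?_⟩, ?_⟩
        · intro i hi b hb
          rw [hmemK] at hi
          push_neg at hi
          subst hi
          rw [hA0, Finset.mem_singleton] at hb
          subst hb
          have : Function.update (fun i : Fin (k+1) => i) 0 0 = (fun i : Fin (k+1) => i) := by
            funext x
            by_cases h : x = 0 <;> simp [Function.update_apply, h]
          rw [this]
        · intro j hj r hr
          simp [hone]
        · intro b hb
          rw [hcovid]
          apply hub
          intro r; rw [hone]; norm_num
      · rw [sum_ite_fin]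
        field_simp
        ring
    · -- lower bound
      rintro c ⟨p, hp, ⟨a, ⟨haprof, _, hamax⟩, haopt⟩, rfl⟩
      set w : Fin (k+1) → ℝ := fun r => v r + p r with hw
      have hwpos : ∀ r, 0 < w r := fun r => add_pos_of_pos_of_nonneg (hvpos r) (hp r)
      -- a covers everything
      have hcover : Finset.univ.image a = Finset.univ := by
        by_contra hne
        obtain ⟨r, hr⟩ : ∃ r : Fin (k+1), r ∉ Finset.univ.image a := by
          by_contra h
          push_neg at h
          exact hne (Finset.eq_univ_iff_forall.2 h)
        have hlt : coveredValue w a Finset.univ < ∑ r, w r :=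
          Finset.sum_lt_sum_of_subset (Finset.subset_univ _) (Finset.mem_univ r) hr
            (hwpos r) (fun j _ _ => le_of_lt (hwpos j))
        have := haopt (fun i => i) hprofid
        rw [hcovid] at this
        linarith
      have hainj : Function.Injective a := by
        have hsurj : Function.Surjective a := by
          intro y
          have : y ∈ Finset.univ.image a := by rw [hcover]; exact Finset.mem_univ y
          obtain ⟨x, _, hx⟩ := Finset.mem_image.1 this
          exact ⟨x, hx⟩
        exact (Finite.injective_iff_surjective).2 hsurj
      have ha0 : a 0 = 0 := hprof0 a haprof
      have haj : ∀ j : Fin (k+1), j ≠ 0 → a j = j := by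
        intro j hj
        have h1 := haprof j
        rw [hAj j hj] at h1
        rcases Finset.mem_insert.1 h1 with h | h
        · exfalso
          apply hj
          apply hainj
          rw [h, ha0]
        · exact Finset.mem_singleton.1 h
      have hpj : ∀ j : Fin (k+1), j ≠ 0 → D/(k:ℝ) ≤ p j := by
        intro j hj
        have h1 := hamax j ((hmemK j).2 hj) 0 (by rw [hAj j hj]; simp)
        rw [haj j hj] at h1
        have h1' : v 0 + p 0 ≤ v j + p j := h1
        have hv0 : v 0 = 1 := by simp [hv]
        have hvj : v j = 1 - D/(k:ℝ) := by simp [hv, hj]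
        rw [hv0, hvj] at h1'
        have := hp 0
        linarith
      -- sum bound
      have h2 : ∑ r ∈ (Finset.univ : Finset (Fin (k+1))).erase 0, p r ≤ ∑ r : Fin (k+1), p r :=
        Finset.sum_le_sum_of_subset_of_nonneg (Finset.erase_subset _ _) (fun r _ _ => hp r)
      have h3 : ∑ r ∈ (Finset.univ : Finset (Fin (k+1))).erase 0, D/(k:ℝ) ≤
          ∑ r ∈ (Finset.univ : Finset (Fin (k+1))).erase 0, p r := by
        apply Finset.sum_le_sum
        intro r hr
        exact hpj r (Finset.mem_erase.1 hr).1
      have h4 : ∑ r ∈ (Finset.univ : Finset (Fin (k+1))).erase 0, D/(k:ℝ) = D := by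
        rw [Finset.sum_const, Finset.card_erase_of_mem (Finset.mem_univ _),
          Finset.card_univ, Fintype.card_fin, nsmul_eq_mul]
        simp only [Nat.add_sub_cancel]
        field_simp
      linarith
  · exact hworst
  · exact hoptW
  · rw [hworst, hoptW]
end

section
/- In the tight example (n = k+1 agents, resource R₀ of value 1 available to all, k private resources of value 1 − D/k each for one compromised agent, 0 ≤ D ≤ k−1), the minimal ℓ1 perturbation making an optimal profile a Nash equilibrium equals D: raising each private resource's value by D/k makes the optimal profile an equilibrium, and no smaller total perturbation suffices. -/
open Finset

variable {N R : Type} [Fintype N] [DecidableEq N] [Fintype R] [DecidableEq R]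

/-- In the tight example (one resource `R₀ = 0` of value 1 available to all,
and `k` private resources of value `1 − D/k`, one per compromised agent), the
distance of the game equals `D`. -/
theorem tight_example_distance (k : ℕ) (hk : 1 ≤ k) (D : ℝ)
    (hD0 : 0 ≤ D) (hDk : D ≤ (k : ℝ) - 1) :
    gameDist (N := Fin (k + 1)) (R := Fin (k + 1))
      (fun i => if i = 0 then {0} else {0, i})
      (Finset.univ.erase 0)
      (fun r => if r = 0 then 1 else 1 - D / (k : ℝ)) = D := by
  have hkpos : (0:ℝ) < k := by exact_mod_cast hk
  have hk0 : (k:ℝ) ≠ 0 := ne_of_gt hkpos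
  unfold gameDist
  set A : Fin (k+1) → Finset (Fin (k+1)) := fun i => if i = 0 then {0} else {0, i} with hA
  set v : Fin (k+1) → ℝ := fun r => if r = 0 then 1 else 1 - D / k with hv
  set K : Finset (Fin (k+1)) := Finset.univ.erase 0 with hK
  have hmem : D ∈ {c | ∃ p : Fin (k+1) → ℝ, (∀ r, 0 ≤ p r) ∧
      PoSoneHolds A K (fun r => v r + p r) ∧ c = ∑ r, p r} := by
    refine ⟨fun r => if r = 0 then 0 else D / k, ?_, ?_, ?_⟩
    · intro r; dsimp only; split
      · exact le_refl 0
      · positivity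
    · have hv1 : (fun r => v r + (if r = 0 then (0:ℝ) else D / k)) = fun _ => (1:ℝ) := by
        funext r; by_cases h : r = 0 <;> simp [hv, h] <;> ring
      rw [hv1]
      refine ⟨fun i => i, ⟨?_, ?_, ?_⟩, ?_⟩
      · intro i; by_cases h : i = 0 <;> simp [hA, h]
      · intro i hi b hb
        have hi0 : i = 0 := by
          simp [hK, Finset.mem_erase] at hi; exact hi
        subst hi0
        have hb0 : b = 0 := by simpa [hA] using hb
        subst hb0
        have hupd : Function.update (fun i : Fin (k+1) => i) 0 0 = fun i => i := by
          simpa using Function.update_eq_self (0 : Fin (k+1)) (fun i : Fin (k+1) => i)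
        rw [hupd]
      · intro j hj r hr; exact le_refl 1
      · intro b hb
        have h1 : coveredValue (fun _ : Fin (k+1) => (1:ℝ)) b Finset.univ
            = ((Finset.univ.image b).card : ℝ) := by
          simp [coveredValue]
        have h2 : coveredValue (fun _ : Fin (k+1) => (1:ℝ)) (fun i : Fin (k+1) => i) Finset.univ
            = ((k:ℝ)+1) := by
          simp [coveredValue, Finset.image_id]
        rw [h1, h2]
        have h3 := Finset.card_le_univ (Finset.univ.image b)
        rw [Fintype.card_fin] at h3
        push_cast
        exact_mod_cast h3
    · rw [Fin.sum_univ_succ]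
      simp [Fin.succ_ne_zero]
      field_simp
  refine le_antisymm (csInf_le ⟨0, ?_⟩ hmem) (le_csInf ⟨D, hmem⟩ ?_)
  · rintro c ⟨p, hp, -, rfl⟩
    exact Finset.sum_nonneg fun r _ => hp r
  · rintro c ⟨p, hp, ⟨a, ⟨hprof, hnorm, hcomp⟩, hopt⟩, rfl⟩
    set v' : Fin (k+1) → ℝ := fun r => v r + p r with hv'
    have hdk : D / k < 1 := (div_lt_one hkpos).mpr (by linarith)
    have hv'pos : ∀ r, 0 < v' r := by
      intro r
      have hpr := hp r
      rcases eq_or_ne r 0 with h | h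
      · subst h; simp [hv', hv]; linarith
      · simp [hv', hv, h]; linarith
    have ha0 : a 0 = 0 := by have := hprof 0; simpa [hA] using this
    have hsub : Finset.univ.image a ⊆ Finset.univ := Finset.subset_univ _
    have hwb : coveredValue v' (fun i : Fin (k+1) => i) Finset.univ = ∑ r, v' r := by
      simp [coveredValue, Finset.image_id]
    have hble := hopt (fun i => i) (by intro i; by_cases h : i = 0 <;> simp [hA, h])
    rw [hwb] at hble
    have himg : Finset.univ.image a = Finset.univ := by
      by_contra hne
      have hnonempty : (Finset.univ \ Finset.univ.image a).Nonempty := by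
        rw [Finset.sdiff_nonempty]
        exact fun h => hne (Finset.Subset.antisymm hsub h)
      have hpos : 0 < ∑ r ∈ Finset.univ \ Finset.univ.image a, v' r :=
        Finset.sum_pos (fun r _ => hv'pos r) hnonempty
      have hsplit := Finset.sum_sdiff (f := v') hsub
      have hcv : coveredValue v' a Finset.univ = ∑ r ∈ Finset.univ.image a, v' r := rfl
      rw [hcv] at hble
      linarith
    have hsurj : Function.Surjective a := by
      intro r
      have hr : r ∈ Finset.univ.image a := by rw [himg]; exact Finset.mem_univ r
      obtain ⟨i, -, hi⟩ := Finset.mem_image.mp hr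
      exact ⟨i, hi⟩
    have hinj : Function.Injective a := Finite.injective_iff_surjective.mpr hsurj
    have haj : ∀ j : Fin (k+1), j ≠ 0 → a j = j := by
      intro j hj
      have hmemj := hprof j
      simp [hA, hj] at hmemj
      rcases hmemj with h | h
      · exact absurd (hinj (h.trans ha0.symm)) hj
      · exact h
    have hpj : ∀ j : Fin (k+1), j ≠ 0 → D / k ≤ p j := by
      intro j hj
      have hjK : j ∈ K := by simp [hK, hj]
      have h0A : (0 : Fin (k+1)) ∈ A j := by simp [hA, hj]
      have hle := hcomp j hjK 0 h0A
      rw [haj j hj] at hle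
      have h0 := hp 0
      simp [hv', hv, hj] at hle
      linarith
    have hcard : (Finset.univ.erase (0 : Fin (k+1))).card = k := by
      rw [Finset.card_erase_of_mem (Finset.mem_univ _), Finset.card_univ, Fintype.card_fin]
      omega
    calc D = ∑ _r ∈ Finset.univ.erase (0 : Fin (k+1)), D / k := by
            rw [Finset.sum_const, hcard, nsmul_eq_mul]; field_simp
      _ ≤ ∑ r ∈ Finset.univ.erase (0:Fin (k+1)), p r :=
            Finset.sum_le_sum fun r hr => hpj r (Finset.mem_erase.mp hr).1
      _ ≤ ∑ r, p r :=
            Finset.sum_le_sum_of_subset_of_nonneg (Finset.subset_univ _) (fun r _ _ => hp r)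
end

section
/- If a^{opt} is a welfare-optimal profile of a coverage game and p is the perturbation that raises only resources {a_i^{opt} : i ∈ K} so that each becomes a maximum-value resource in the corresponding compromised agent's action set, then a^{opt} is a Nash equilibrium of the perturbed game G_p, so PoS(G_p) = 1. -/
open Finset

variable {N R : Type} [Fintype N] [DecidableEq N] [Fintype R] [DecidableEq R]

/-- If `p` raises only the resources used by compromised agents in an optimal
profile `a^{opt}`, making each a maximum-value resource of the corresponding
action set, then `a^{opt}` is a Nash equilibrium of `G_p`, so `PoS(G_p) = 1`. -/
theorem perturbed_opt_is_nash (A : N → Finset R) (K : Finset N) (v : R → ℝ)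
    (hv0 : ∀ r, 0 ≤ v r)
    (aopt : N → R) (hprof : isProfile A aopt)
    (hopt : ∀ b, isProfile A b →
      coveredValue v b Finset.univ ≤ coveredValue v aopt Finset.univ)
    (p : R → ℝ) (hp0 : ∀ r, 0 ≤ p r)
    (hsupp : ∀ r, p r ≠ 0 → ∃ i ∈ K, aopt i = r)
    (hargmax : ∀ j ∈ K, ∀ r ∈ A j, v r + p r ≤ v (aopt j) + p (aopt j)) :
    isNE A K (fun r => v r + p r) aopt ∧ PoSoneHolds A K (fun r => v r + p r) := by
  set vp := fun r => v r + p r with hvp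
  have hcv : ∀ b : N → R, coveredValue vp b Finset.univ
      = coveredValue v b Finset.univ + ∑ r ∈ Finset.univ.image b, p r := by
    intro b; simp [coveredValue, hvp, Finset.sum_add_distrib]
  have hpsum : ∀ b : N → R,
      ∑ r ∈ Finset.univ.image b, p r ≤ ∑ r ∈ Finset.univ.image aopt, p r := by
    intro b
    have h1 : ∑ r ∈ Finset.univ.image aopt, p r = ∑ r : R, p r := by
      apply Finset.sum_subset (Finset.subset_univ _)
      intro r _ hr
      by_contra h
      obtain ⟨i, _, hir⟩ := hsupp r h
      exact hr (Finset.mem_image.2 ⟨i, Finset.mem_univ i, hir⟩)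
    rw [h1]
    exact Finset.sum_le_sum_of_subset_of_nonneg (Finset.subset_univ _)
      (fun r _ _ => hp0 r)
  have hoptp : ∀ b, isProfile A b →
      coveredValue vp b Finset.univ ≤ coveredValue vp aopt Finset.univ := by
    intro b hb
    rw [hcv, hcv]
    exact add_le_add (hopt b hb) (hpsum b)
  have hNE : isNE A K vp aopt := by
    refine ⟨hprof, ?_, hargmax⟩
    intro i hi b hb
    have hupd : isProfile A (Function.update aopt i b) := by
      intro j
      by_cases h : j = i
      · subst h; simpa using hb
      · simpa [Function.update_of_ne h] using hprof j
    have huniv : coveredValue vp (Function.update aopt i b) (Finset.univ.erase i)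
        = coveredValue vp aopt (Finset.univ.erase i) := by
      unfold coveredValue
      congr 1
      apply Finset.image_congr
      intro x hx
      exact Function.update_of_ne (Finset.ne_of_mem_erase hx) _ _
    unfold utility
    rw [huniv]
    exact sub_le_sub_right (hoptp _ hupd) _
  exact ⟨hNE, aopt, hNE, hoptp⟩
end
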